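/- Let h : F₂ⁿ → Fin (2^t) be a function with t ≤ n, and let G be the graph on F₂ⁿ where x ~ y iff x + y is a good shift (x ≠ y). Then every vertex of G has degree at least 2^(n−t) − 1. -/

import Mathlib

theorem stmt_4 (n t : ℕ) (ht : t ≤ n) (h : (Fin n → ZMod 2) → Fin (2 ^ t))
    (x : Fin n → ZMod 2) :
    2 ^ (n - t) - 1 ≤
      Nat.card {y : Fin n → ZMod 2 | y ≠ x ∧
        ∃ u v : Fin n → ZMod 2, h u = h v ∧ u + v = x + y} := by
  have hself : ∀ w : Fin n → ZMod 2, w + w = 0 := fun w => by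
    funext i
    exact CharTwo.add_self_eq_zero (w i)
  obtain ⟨b, hb⟩ := Fintype.exists_le_card_fiber_of_mul_le_card h (n := 2 ^ (n - t)) (by
    have h1 : (2 : ℕ) ^ t * 2 ^ (n - t) = 2 ^ n := by
      rw [← pow_add, Nat.add_sub_cancel' ht]
    simp only [Fintype.card_fin, Fintype.card_fun, ZMod.card]
    omega)
  set S : Finset (Fin n → ZMod 2) := Finset.univ.filter fun a => h a = b with hS
  have hScard : 2 ^ (n - t) ≤ S.card := hb
  have hSne : S.Nonempty := Finset.card_pos.mp (lt_of_lt_of_le (Nat.pow_pos (by norm_num)) hScard)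
  obtain ⟨u₀, hu₀⟩ := hSne
  set T : Finset (Fin n → ZMod 2) := (S.erase u₀).image (fun v => x + u₀ + v) with hT
  have hTcard : S.card - 1 ≤ T.card := by
    rw [hT, Finset.card_image_of_injective _ (fun a c hac => by
      simpa using add_left_cancel hac)]
    rw [Finset.card_erase_of_mem hu₀]
  have hTsub : (↑T : Set (Fin n → ZMod 2)) ⊆ {y : Fin n → ZMod 2 | y ≠ x ∧
      ∃ u v : Fin n → ZMod 2, h u = h v ∧ u + v = x + y} := by
    intro y hy
    simp only [hT, Finset.coe_image, Set.mem_image, Finset.mem_coe, Finset.mem_erase] at hy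
    obtain ⟨v, ⟨hvne, hvS⟩, rfl⟩ := hy
    have hhv : h v = b := by simpa [hS] using hvS
    have hhu : h u₀ = b := by simpa [hS] using hu₀
    constructor
    · intro hcontra
      apply hvne
      have : u₀ + v = 0 := by
        calc u₀ + v = x + (x + u₀ + v) := by
              rw [← add_assoc, ← add_assoc, hself x, zero_add]
          _ = x + x := by rw [hcontra]
          _ = 0 := hself x
      calc v = 0 + v := (zero_add v).symm
        _ = (u₀ + u₀) + v := by rw [hself u₀]
        _ = u₀ + (u₀ + v) := by rw [add_assoc]
        _ = u₀ := by rw [this, add_zero]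
    · exact ⟨u₀, v, hhu.trans hhv.symm, by
        rw [← add_assoc, ← add_assoc, hself x, zero_add]⟩
  have hfin : ({y : Fin n → ZMod 2 | y ≠ x ∧
      ∃ u v : Fin n → ZMod 2, h u = h v ∧ u + v = x + y}).Finite := Set.toFinite _
  calc 2 ^ (n - t) - 1 ≤ S.card - 1 := by omega
    _ ≤ T.card := hTcard
    _ = (↑T : Set (Fin n → ZMod 2)).ncard := (Set.ncard_coe_finset T).symm
    _ ≤ _ := by
        rw [Nat.card_coe_set_eq]
        exact Set.ncard_le_ncard hTsub hfin
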